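/- Let n ≥ 1 and let 0 < a₁ ≤ a₂ ≤ … ≤ a_n be real numbers, and let P, S > 0 be scalars such that Σ_{i=1}^n a_i ≤ S and Π_{i=1}^n a_i ≥ P. Then a₁ ≥ (n−1)!·P / S^{n−1}. -/

import Mathlib

open scoped BigOperators

noncomputable section

private lemma prod_nat_sub (n : ℕ) : ∏ i ∈ Finset.range n, (n - i) = Nat.factorial n := by
  rw [← Finset.prod_range_reflect]
  rw [← Finset.prod_range_add_one_eq_factorial]
  apply Finset.prod_congr rfl
  intro i hi
  rw [Finset.mem_range] at hi
  omega

/-- Lower bound on the smallest of `n` ordered positive reals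
from an upper bound `S` on their sum and a lower bound `P` on their product. -/
theorem min_lower_bound_from_trace_det
    {n : ℕ} (hn : 0 < n) (a : Fin n → ℝ) (P S : ℝ)
    (hpos : ∀ i, 0 < a i) (hmono : Monotone a)
    (hP : 0 < P) (hS : 0 < S)
    (hsum : ∑ i, a i ≤ S) (hprod : P ≤ ∏ i, a i) :
    (Nat.factorial (n - 1) : ℝ) * P / S ^ (n - 1) ≤ a ⟨0, hn⟩ := by
  set i0 : Fin n := ⟨0, hn⟩
  set T : Finset (Fin n) := Finset.univ.erase i0 with hT
  -- key pointwise bound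
  have h1 : ∀ i : Fin n, ((n - i.val : ℕ) : ℝ) * a i ≤ S := by
    intro i
    have hcard : (Finset.Ici i).card = n - i.val := Fin.card_Ici i
    calc ((n - i.val : ℕ) : ℝ) * a i = ∑ _j ∈ Finset.Ici i, a i := by
          rw [Finset.sum_const, hcard, nsmul_eq_mul]
      _ ≤ ∑ j ∈ Finset.Ici i, a j :=
          Finset.sum_le_sum (fun j hj => hmono (Finset.mem_Ici.mp hj))
      _ ≤ ∑ j, a j :=
          Finset.sum_le_sum_of_subset_of_nonneg (Finset.subset_univ _)
            (fun j _ _ => (hpos j).le)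
      _ ≤ S := hsum
  have hTcard : T.card = n - 1 := by
    rw [hT, Finset.card_erase_of_mem (Finset.mem_univ _), Finset.card_univ, Fintype.card_fin]
  have h2 : ∏ i ∈ T, (((n - i.val : ℕ) : ℝ) * a i) ≤ S ^ (n - 1) := by
    calc ∏ i ∈ T, (((n - i.val : ℕ) : ℝ) * a i) ≤ ∏ _i ∈ T, S := by
          apply Finset.prod_le_prod
          · intro i _; exact mul_nonneg (Nat.cast_nonneg _) (hpos i).le
          · intro i _; exact h1 i
      _ = S ^ (n - 1) := by rw [Finset.prod_const, hTcard]
  -- product of coefficients equals (n-1)!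
  have h3nat : n * ∏ i ∈ T, (n - i.val) = Nat.factorial n := by
    have : ∏ i : Fin n, (n - i.val) = Nat.factorial n := by
      rw [Fin.prod_univ_eq_prod_range (fun i => n - i) n]
      exact prod_nat_sub n
    rw [← this, ← Finset.mul_prod_erase Finset.univ (fun i : Fin n => n - i.val)
      (Finset.mem_univ i0)]
    simp [i0, hT]
  have h3 : ∏ i ∈ T, (n - i.val) = Nat.factorial (n - 1) := by
    have hfac : Nat.factorial n = n * Nat.factorial (n - 1) := by
      obtain ⟨m, rfl⟩ := Nat.exists_eq_succ_of_ne_zero hn.ne'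
      simp [Nat.factorial_succ]
    have := h3nat
    rw [hfac] at this
    exact Nat.eq_of_mul_eq_mul_left hn this
  have h3' : ∏ i ∈ T, ((n - i.val : ℕ) : ℝ) = (Nat.factorial (n - 1) : ℝ) := by
    rw [← Nat.cast_prod, h3]
  have h4 : (Nat.factorial (n - 1) : ℝ) * ∏ i ∈ T, a i ≤ S ^ (n - 1) := by
    rw [← h3', ← Finset.prod_mul_distrib]
    exact h2
  have hprodsplit : ∏ i, a i = a i0 * ∏ i ∈ T, a i :=
    (Finset.mul_prod_erase Finset.univ a (Finset.mem_univ i0)).symm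
  have hTpos : 0 < ∏ i ∈ T, a i := Finset.prod_pos (fun i _ => hpos i)
  have hSn : (0:ℝ) < S ^ (n - 1) := pow_pos hS _
  rw [div_le_iff₀ hSn]
  calc (Nat.factorial (n - 1) : ℝ) * P
      ≤ (Nat.factorial (n - 1) : ℝ) * (a i0 * ∏ i ∈ T, a i) := by
        apply mul_le_mul_of_nonneg_left _ (Nat.cast_nonneg _)
        rw [← hprodsplit]; exact hprod
    _ = a i0 * ((Nat.factorial (n - 1) : ℝ) * ∏ i ∈ T, a i) := by ring
    _ ≤ a i0 * S ^ (n - 1) := mul_le_mul_of_nonneg_left h4 (hpos i0).le
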